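/- Verification theorem for average reward: suppose bounded functions $w_n$ and constants $\lambda_n$ satisfy, for all $n$ and $x$, $w_n(x) = \sup_{a \in U}\big[c_n(x,a) - \lambda_n + \int_E w_{n+1}(y) P_n^a(x,dy)\big]$ with $\sup_n \|w_n\| < \infty$ (supremum norm). Then for every admissible control sequence $V = (a_0, a_1, \ldots)$, $\liminf_{n\to\infty} \frac{1}{n}\mathbb{E}_x^V\big[\sum_{i=0}^{n-1} c_i(X_i, a_i)\big] \le \liminf_{n\to\infty}\frac{1}{n}\sum_{i=0}^{n-1}\lambda_i$, with equality when $a_i = u_i(X_i)$ for measurable selectors $u_i$ attaining the supremum. -/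

import Mathlib

open MeasureTheory Filter

/-- Expected total reward over `m` remaining steps, starting at time `k` with
history `h` (most recent state first), for the controlled time-inhomogeneous
Markov chain with kernels `P`, rewards `c` and (history-dependent) control `a`:
`rewSum P c a k m h = E[∑_{i=k}^{k+m-1} c_i(X_i, a_i) | history h]`. -/
noncomputable def rewSum {E U : Type*} [MeasurableSpace E] [Inhabited E]
    (P : ℕ → U → E → Measure E) (c : ℕ → E → U → ℝ)
    (a : ℕ → List E → U) : ℕ → ℕ → List E → ℝ
  | _, 0, _ => 0
  | k, m + 1, h => c k h.headI (a k h) +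
      ∫ y, rewSum P c a (k + 1) m (y :: h) ∂(P k (a k h) h.headI)

/-- bound on integral against a probability measure -/
lemma int_abs_bound {E : Type*} [MeasurableSpace E] (μ : Measure E)
    [IsProbabilityMeasure μ] {f : E → ℝ} {C : ℝ} (hb : ∀ y, |f y| ≤ C) :
    |∫ y, f y ∂μ| ≤ C := by
  have := norm_integral_le_of_norm_le_const (μ := μ) (f := f) (C := C)
    (Eventually.of_forall fun y => by simpa [Real.norm_eq_abs] using hb y)
  simpa [Real.norm_eq_abs, measure_univ] using this

/-- liminf comparison up to a vanishing `D / n` error term -/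
lemma liminf_le_aux {f g : ℕ → ℝ} {Ka Kb D : ℝ}
    (hfb : ∀ᶠ n in atTop, -Ka ≤ f n)
    (hga : ∀ᶠ n in atTop, g n ≤ Kb) (hgb : ∀ᶠ n in atTop, -Kb ≤ g n)
    (h : ∀ n : ℕ, 1 ≤ n → f n ≤ g n + D / n) :
    liminf f atTop ≤ liminf g atTop := by
  have hgc : IsCoboundedUnder (· ≥ ·) atTop g :=
    IsBoundedUnder.isCoboundedUnder_ge ⟨Kb, hga⟩
  have hgbb : IsBoundedUnder (· ≥ ·) atTop g := ⟨-Kb, hgb⟩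
  by_contra hcon
  push_neg at hcon
  set δ := (liminf f atTop - liminf g atTop) / 2 with hδ
  have hδpos : 0 < δ := by simp only [hδ]; linarith
  have hev : ∀ᶠ n in atTop, f n ≤ g n + δ := by
    obtain ⟨N, hN⟩ := exists_nat_gt (|D| / δ)
    filter_upwards [eventually_ge_atTop (max 1 (N + 1))] with n hn
    have hn1 : 1 ≤ n := le_trans (le_max_left _ _) hn
    have hnN : (N : ℝ) < n := by
      exact_mod_cast lt_of_lt_of_le (Nat.lt_succ_self N) (le_trans (le_max_right _ _) hn)
    have hn' : (0 : ℝ) < n := lt_of_le_of_lt (by positivity) hnN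
    have herr : D / (n : ℝ) ≤ δ := by
      have h1 : |D| / δ < n := lt_trans hN hnN
      rw [div_lt_iff₀ hδpos] at h1
      have h2 : D ≤ |D| := le_abs_self D
      rw [div_le_iff₀ hn']
      nlinarith [mul_comm δ (n : ℝ)]
    linarith [h n hn1]
  have h1 : liminf f atTop ≤ liminf (fun n => g n + δ) atTop :=
    liminf_le_liminf hev ⟨-Ka, hfb⟩
      (IsBoundedUnder.isCoboundedUnder_ge
        ⟨Kb + δ, hga.mono fun n hn => add_le_add_left hn δ⟩)
  rw [liminf_add_const atTop g δ hgc hgbb] at h1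
  linarith

theorem stmt_13 {E U : Type*} [MeasurableSpace E] [Inhabited E] [Nonempty U]
    (P : ℕ → U → E → Measure E) (hP : ∀ n a x, IsProbabilityMeasure (P n a x))
    (c : ℕ → E → U → ℝ) (hcb : ∃ M, ∀ n x a, |c n x a| ≤ M)
    (w : ℕ → E → ℝ) (l : ℕ → ℝ)
    (hwm : ∀ n, Measurable (w n)) (hwb : ∃ C, ∀ n x, |w n x| ≤ C)
    (hBel : ∀ n x, w n x = ⨆ a : U, (c n x a - l n + ∫ y, w (n + 1) y ∂(P n a x)))
    (x : E) :
    (∀ a : ℕ → List E → U,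
      (∀ k m h, Integrable (fun y => rewSum P c a (k + 1) m (y :: h))
          (P k (a k h) h.headI)) →
      liminf (fun n : ℕ => (1 / (n : ℝ)) * rewSum P c a 0 n [x]) atTop ≤
        liminf (fun n : ℕ => (1 / (n : ℝ)) * ∑ i ∈ Finset.range n, l i) atTop) ∧
    (∀ u : ℕ → E → U,
      (∀ n y, w n y = c n y (u n y) - l n + ∫ z, w (n + 1) z ∂(P n (u n y) y)) →
      (∀ k m h, Integrable
          (fun y => rewSum P c (fun j hist => u j hist.headI) (k + 1) m (y :: h))
          (P k (u k h.headI) h.headI)) →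
      liminf (fun n : ℕ =>
          (1 / (n : ℝ)) * rewSum P c (fun j hist => u j hist.headI) 0 n [x]) atTop =
        liminf (fun n : ℕ => (1 / (n : ℝ)) * ∑ i ∈ Finset.range n, l i) atTop) := by
  obtain ⟨M, hM⟩ := hcb
  obtain ⟨C, hC⟩ := hwb
  have hM0 : 0 ≤ M := le_trans (abs_nonneg _) (hM 0 default (Classical.arbitrary U))
  have hC0 : 0 ≤ C := le_trans (abs_nonneg _) (hC 0 default)
  -- integrability of w against the kernels
  have wInt : ∀ n m (a : U) (y : E), Integrable (w m) (P n a y) := by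
    intro n m a y
    haveI := hP n a y
    exact ⟨(hwm m).aestronglyMeasurable,
      HasFiniteIntegral.of_bounded (C := C)
        (Eventually.of_forall fun z => by simpa [Real.norm_eq_abs] using hC m z)⟩
  have intwb : ∀ n m (a : U) (y : E), |∫ z, w m z ∂(P n a y)| ≤ C := by
    intro n m a y
    haveI := hP n a y
    exact int_abs_bound _ fun z => hC m z
  -- Bellman inequality: each action's value is at most w
  have hBdd : ∀ n (y : E), BddAbove (Set.range fun a : U =>
      c n y a - l n + ∫ z, w (n + 1) z ∂(P n a y)) := by
    intro n y
    refine ⟨M - l n + C, ?_⟩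
    rintro t ⟨a, rfl⟩
    have h1 := (abs_le.1 (hM n y a)).2
    have h2 := (abs_le.1 (intwb n (n + 1) a y)).2
    dsimp only
    linarith
  have hbel_le : ∀ n (y : E) (a : U),
      c n y a - l n + ∫ z, w (n + 1) z ∂(P n a y) ≤ w n y := by
    intro n y a
    rw [hBel n y]
    exact le_ciSup (hBdd n y) a
  -- bound on l
  have hl : ∀ n, |l n| ≤ M + 2 * C := by
    intro n
    have a0 := Classical.arbitrary U
    have h1 := hbel_le n default a0
    have h2 : w n default ≤ M - l n + C := by
      rw [hBel n default]
      refine ciSup_le fun a => ?_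
      have := (abs_le.1 (hM n default a)).2
      have := (abs_le.1 (intwb n (n + 1) a default)).2
      linarith
    have h3 := abs_le.1 (hC n default)
    have h4 := abs_le.1 (hM n default a0)
    have h5 := abs_le.1 (intwb n (n + 1) a0 default)
    rw [abs_le]
    constructor <;> linarith
  -- pointwise bound on rewSum
  have rewb : ∀ (a : ℕ → List E → U),
      (∀ k m h, Integrable (fun y => rewSum P c a (k + 1) m (y :: h))
          (P k (a k h) h.headI)) →
      ∀ m k h, |rewSum P c a k m h| ≤ m * M := by
    intro a hInt m
    induction m with
    | zero => intro k h; simp [rewSum]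
    | succ m ih =>
      intro k h
      haveI := hP k (a k h) h.headI
      have hint : |∫ y, rewSum P c a (k + 1) m (y :: h) ∂(P k (a k h) h.headI)|
          ≤ m * M := int_abs_bound _ fun y => ih (k + 1) (y :: h)
      have h1 := abs_le.1 (hM k h.headI (a k h))
      have h2 := abs_le.1 hint
      rw [rewSum, abs_le]
      push_cast
      constructor <;> nlinarith
  -- averaged bound on rewSum
  have rewavg : ∀ (a : ℕ → List E → U),
      (∀ k m h, Integrable (fun y => rewSum P c a (k + 1) m (y :: h))
          (P k (a k h) h.headI)) →
      ∀ n : ℕ, |(1 / (n : ℝ)) * rewSum P c a 0 n [x]| ≤ M := by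
    intro a hInt n
    rcases Nat.eq_zero_or_pos n with rfl | hn
    · simpa using hM0
    · have hn' : (0 : ℝ) < n := by exact_mod_cast hn
      rw [abs_mul, abs_of_nonneg (by positivity : (0:ℝ) ≤ 1 / (n:ℝ))]
      calc 1 / (n : ℝ) * |rewSum P c a 0 n [x]| ≤ 1 / (n : ℝ) * ((n : ℝ) * M) :=
            mul_le_mul_of_nonneg_left (rewb a hInt n 0 [x]) (by positivity)
        _ = M := by field_simp
  -- upper bound: rewSum ≤ ∑ l + w + C  (for any admissible control)
  have upper : ∀ (a : ℕ → List E → U),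
      (∀ k m h, Integrable (fun y => rewSum P c a (k + 1) m (y :: h))
          (P k (a k h) h.headI)) →
      ∀ m k h, rewSum P c a k m h ≤
        (∑ i ∈ Finset.range m, l (k + i)) + w k h.headI + C := by
    intro a hInt m
    induction m with
    | zero =>
      intro k h
      have := (abs_le.1 (hC k h.headI)).1
      simp only [rewSum, Finset.range_zero, Finset.sum_empty, zero_add]
      linarith
    | succ m ih =>
      intro k h
      set μ := P k (a k h) h.headI with hμ
      haveI := hP k (a k h) h.headI
      set S := ∑ i ∈ Finset.range m, l (k + 1 + i) with hS
      have key : ∫ y, rewSum P c a (k + 1) m (y :: h) ∂μ ≤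
          S + (∫ y, w (k + 1) y ∂μ) + C := by
        have hwI : Integrable (fun y => S + w (k + 1) y) μ :=
          (integrable_const S).add (wInt k (k + 1) (a k h) h.headI)
        have hRHS : Integrable (fun y => (S + w (k + 1) y) + C) μ :=
          hwI.add (integrable_const C)
        have := integral_mono (hInt k m h) hRHS (fun y => by
          have := ih (k + 1) (y :: h)
          simp only [List.headI_cons] at this
          linarith)
        rwa [integral_add hwI (integrable_const C),
          integral_add (integrable_const S) (wInt k (k + 1) (a k h) h.headI),
          integral_const, integral_const, probReal_univ,
          one_smul, one_smul] at this
      have hb := hbel_le k h.headI (a k h)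
      have hsum : ∑ i ∈ Finset.range (m + 1), l (k + i) = S + l k := by
        rw [Finset.sum_range_succ']
        simp only [Nat.add_zero]
        congr 1
        rw [hS]
        exact Finset.sum_congr rfl fun i _ => congrArg l (by ring)
      rw [rewSum, hsum]
      rw [hμ] at key
      linarith
  -- lower bound for a Bellman-optimal selector
  have lower : ∀ (u : ℕ → E → U),
      (∀ n y, w n y = c n y (u n y) - l n + ∫ z, w (n + 1) z ∂(P n (u n y) y)) →
      (∀ k m h, Integrable
          (fun y => rewSum P c (fun j hist => u j hist.headI) (k + 1) m (y :: h))
          (P k (u k h.headI) h.headI)) →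
      ∀ m k h, (∑ i ∈ Finset.range m, l (k + i)) + w k h.headI - C ≤
        rewSum P c (fun j hist => u j hist.headI) k m h := by
    intro u hSel hInt m
    induction m with
    | zero =>
      intro k h
      have := (abs_le.1 (hC k h.headI)).2
      simp only [rewSum, Finset.range_zero, Finset.sum_empty, zero_add]
      linarith
    | succ m ih =>
      intro k h
      set a : ℕ → List E → U := fun j hist => u j hist.headI with ha
      set μ := P k (u k h.headI) h.headI with hμ
      haveI : IsProbabilityMeasure μ := hP k (u k h.headI) h.headI
      set S := ∑ i ∈ Finset.range m, l (k + 1 + i) with hS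
      have key : S + (∫ y, w (k + 1) y ∂μ) - C ≤
          ∫ y, rewSum P c a (k + 1) m (y :: h) ∂μ := by
        have hwI : Integrable (fun y => S + w (k + 1) y) μ :=
          (integrable_const S).add (wInt k (k + 1) (u k h.headI) h.headI)
        have hLHS : Integrable (fun y => (S + w (k + 1) y) - C) μ :=
          hwI.sub (integrable_const C)
        have := integral_mono hLHS (hInt k m h) (fun y => by
          have := ih (k + 1) (y :: h)
          simp only [List.headI_cons] at this
          linarith)
        rwa [integral_sub hwI (integrable_const C),
          integral_add (integrable_const S) (wInt k (k + 1) (u k h.headI) h.headI),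
          integral_const, integral_const, probReal_univ,
          one_smul, one_smul] at this
      have hb := hSel k h.headI
      have hsum : ∑ i ∈ Finset.range (m + 1), l (k + i) = S + l k := by
        rw [Finset.sum_range_succ']
        simp only [Nat.add_zero]
        congr 1
        rw [hS]
        exact Finset.sum_congr rfl fun i _ => congrArg l (by ring)
      rw [rewSum, hsum]
      rw [hμ] at key
      linarith
  -- the λ-averages are bounded
  have hgS : ∀ n : ℕ, |(1 / (n : ℝ)) * ∑ i ∈ Finset.range n, l i| ≤ M + 2 * C := by
    intro n
    rcases Nat.eq_zero_or_pos n with rfl | hn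
    · simp; linarith
    · have hsum : |∑ i ∈ Finset.range n, l i| ≤ n * (M + 2 * C) := by
        calc |∑ i ∈ Finset.range n, l i| ≤ ∑ i ∈ Finset.range n, |l i| :=
              Finset.abs_sum_le_sum_abs _ _
          _ ≤ ∑ _i ∈ Finset.range n, (M + 2 * C) :=
              Finset.sum_le_sum fun i _ => hl i
          _ = n * (M + 2 * C) := by simp [Finset.sum_const, Finset.card_range, nsmul_eq_mul]; ring
      have hn' : (0 : ℝ) < n := by exact_mod_cast hn
      rw [abs_mul, abs_of_nonneg (by positivity : (0:ℝ) ≤ 1 / (n:ℝ))]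
      calc 1 / (n : ℝ) * |∑ i ∈ Finset.range n, l i| ≤
            1 / (n : ℝ) * ((n : ℝ) * (M + 2 * C)) :=
              mul_le_mul_of_nonneg_left hsum (by positivity)
        _ = M + 2 * C := by field_simp
  constructor
  · -- first part
    intro a hInt
    apply liminf_le_aux (Ka := M) (Kb := M + 2 * C) (D := w 0 x + C)
    · exact Eventually.of_forall fun n => (abs_le.1 (rewavg a hInt n)).1
    · exact Eventually.of_forall fun n => (abs_le.1 (hgS n)).2
    · exact Eventually.of_forall fun n => (abs_le.1 (hgS n)).1
    · intro n hn
      have hn' : (0 : ℝ) < n := by exact_mod_cast hn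
      have h1 : rewSum P c a 0 n [x] ≤
          (∑ i ∈ Finset.range n, l i) + w 0 x + C := by
        have := upper a hInt n 0 [x]
        simpa using this
      have h2 : 1 / (n:ℝ) * rewSum P c a 0 n [x] ≤
          1 / (n:ℝ) * ((∑ i ∈ Finset.range n, l i) + w 0 x + C) :=
        mul_le_mul_of_nonneg_left h1 (by positivity)
      have h3 : 1 / (n:ℝ) * ((∑ i ∈ Finset.range n, l i) + w 0 x + C) =
          1 / (n:ℝ) * (∑ i ∈ Finset.range n, l i) + (w 0 x + C) / n := by
        field_simp
        ring
      linarith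
  · -- second part
    intro u hSel hInt
    set a : ℕ → List E → U := fun j hist => u j hist.headI with ha
    apply le_antisymm
    · apply liminf_le_aux (Ka := M) (Kb := M + 2 * C) (D := w 0 x + C)
      · exact Eventually.of_forall fun n => (abs_le.1 (rewavg a hInt n)).1
      · exact Eventually.of_forall fun n => (abs_le.1 (hgS n)).2
      · exact Eventually.of_forall fun n => (abs_le.1 (hgS n)).1
      · intro n hn
        have hn' : (0 : ℝ) < n := by exact_mod_cast hn
        have h1 : rewSum P c a 0 n [x] ≤
            (∑ i ∈ Finset.range n, l i) + w 0 x + C := by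
          have := upper a hInt n 0 [x]
          simpa using this
        have h2 : 1 / (n:ℝ) * rewSum P c a 0 n [x] ≤
            1 / (n:ℝ) * ((∑ i ∈ Finset.range n, l i) + w 0 x + C) :=
          mul_le_mul_of_nonneg_left h1 (by positivity)
        have h3 : 1 / (n:ℝ) * ((∑ i ∈ Finset.range n, l i) + w 0 x + C) =
            1 / (n:ℝ) * (∑ i ∈ Finset.range n, l i) + (w 0 x + C) / n := by
          field_simp
          ring
        linarith
    · apply liminf_le_aux (Ka := M + 2 * C) (Kb := M) (D := C - w 0 x)
      · exact Eventually.of_forall fun n => (abs_le.1 (hgS n)).1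
      · exact Eventually.of_forall fun n => (abs_le.1 (rewavg a hInt n)).2
      · exact Eventually.of_forall fun n => (abs_le.1 (rewavg a hInt n)).1
      · intro n hn
        have hn' : (0 : ℝ) < n := by exact_mod_cast hn
        have h1 : (∑ i ∈ Finset.range n, l i) + w 0 x - C ≤
            rewSum P c a 0 n [x] := by
          have := lower u hSel hInt n 0 [x]
          simpa using this
        have h2 : 1 / (n:ℝ) * ((∑ i ∈ Finset.range n, l i) + w 0 x - C) ≤
            1 / (n:ℝ) * rewSum P c a 0 n [x] :=
          mul_le_mul_of_nonneg_left h1 (by positivity)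
        have h3 : 1 / (n:ℝ) * ((∑ i ∈ Finset.range n, l i) + w 0 x - C) =
            1 / (n:ℝ) * (∑ i ∈ Finset.range n, l i) - (C - w 0 x) / n := by
          field_simp
          ring
        linarith
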